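/- Under the block Hessenberg structure E_l A E_h = 0 for l > h+1, there exists a constant C > 0 such that for all t ∈ [0,1], all l ≥ h in {1,...,n}, and all unit vectors θ ∈ ℝ^N, one has |E_l e^{tA} E_h θ| ≤ C t^{l-h}. -/

import Mathlib

open Matrix NormedSpace

private lemma vanish_aux {N n : ℕ} (A : Matrix (Fin N) (Fin N) ℝ)
    (E : Fin n → Matrix (Fin N) (Fin N) ℝ)
    (horth : ∀ l h, l ≠ h → E l * E h = 0)
    (hsum : ∑ h, E h = 1)
    (hstruct : ∀ l h : Fin n, (l : ℕ) > (h : ℕ) + 1 → E l * A * E h = 0) :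
    ∀ k : ℕ, ∀ l h : Fin n, (h : ℕ) + k < (l : ℕ) → E l * A ^ k * E h = 0 := by
  intro k
  induction k with
  | zero =>
    intro l h hlt
    simp only [pow_zero, mul_one]
    exact horth l h (fun e => by rw [e] at hlt; omega)
  | succ k ih =>
    intro l h hlt
    have key : E l * A ^ (k + 1) * E h
        = ∑ m, (E l * A ^ k * E m) * (A * E h) := by
      have h1 : E l * A ^ (k + 1) * E h
          = E l * A ^ k * ((1 : Matrix (Fin N) (Fin N) ℝ) * (A * E h)) := by
        rw [one_mul, pow_succ]; simp [mul_assoc]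
      rw [h1, ← hsum, Finset.sum_mul, Finset.mul_sum]
      exact Finset.sum_congr rfl fun m _ => by simp [mul_assoc]
    rw [key]
    apply Finset.sum_eq_zero
    intro m _
    by_cases hm : (m : ℕ) + k < (l : ℕ)
    · rw [ih l m hm, zero_mul]
    · have : E m * (A * E h) = 0 := by
        have := hstruct m h (by omega)
        rw [← mul_assoc]; exact this
      calc (E l * A ^ k * E m) * (A * E h)
          = (E l * A ^ k) * (E m * (A * E h)) := by simp [mul_assoc]
        _ = 0 := by rw [this, mul_zero]

private lemma map_exp_euclidean {N : ℕ} (M : Matrix (Fin N) (Fin N) ℝ) :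
    Matrix.toEuclideanCLM (n := Fin N) (𝕜 := ℝ) (NormedSpace.exp M)
      = NormedSpace.exp (Matrix.toEuclideanCLM (n := Fin N) (𝕜 := ℝ) M) := by
  letI : NormedRing (Matrix (Fin N) (Fin N) ℝ) := Matrix.linftyOpNormedRing
  letI : NormedAlgebra ℝ (Matrix (Fin N) (Fin N) ℝ) := Matrix.linftyOpNormedAlgebra
  set φ := Matrix.toEuclideanCLM (n := Fin N) (𝕜 := ℝ)
  have hφc : Continuous φ := by
    have : Continuous (LinearMap.mk (σ := RingHom.id ℝ)
        ⟨(φ : Matrix (Fin N) (Fin N) ℝ → _), fun x y => map_add φ x y⟩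
        (fun c x => map_smul φ c x)) :=
      LinearMap.continuous_of_finiteDimensional _
    exact this
  letI : NormedAlgebra ℚ (Matrix (Fin N) (Fin N) ℝ) := NormedAlgebra.restrictScalars ℚ ℝ _
  exact map_exp φ hφc M

set_option maxHeartbeats 2000000 in
set_option synthInstance.maxHeartbeats 1000000 in
/-- Under the block Hessenberg structure `E l * A * E h = 0` for `l > h + 1`, there is `C > 0`
such that `|E_l e^{tA} E_h θ| ≤ C t^{l-h}` for all `t ∈ [0,1]`, `l ≥ h` and unit vectors `θ`. -/
theorem stmt3 (N n : ℕ) (A : Matrix (Fin N) (Fin N) ℝ)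
    (E : Fin n → Matrix (Fin N) (Fin N) ℝ)
    (hidem : ∀ h, E h * E h = E h)
    (horth : ∀ l h, l ≠ h → E l * E h = 0)
    (hsym : ∀ h, (E h)ᵀ = E h)
    (hsum : ∑ h, E h = 1)
    (hstruct : ∀ l h : Fin n, (l : ℕ) > (h : ℕ) + 1 → E l * A * E h = 0) :
    ∃ C > 0, ∀ t ∈ Set.Icc (0 : ℝ) 1, ∀ l h : Fin n, (h : ℕ) ≤ (l : ℕ) →
      ∀ θ : EuclideanSpace ℝ (Fin N), ‖θ‖ = 1 →
      ‖Matrix.toEuclideanLin (E l * NormedSpace.exp (t • A) * E h) θ‖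
        ≤ C * t ^ ((l : ℕ) - (h : ℕ)) := by
  classical
  set φ := Matrix.toEuclideanCLM (n := Fin N) (𝕜 := ℝ) with hφdef
  obtain ⟨a, ha⟩ : ∃ x, x = φ A := ⟨_, rfl⟩
  obtain ⟨P, hP⟩ : ∃ P : Fin n → (EuclideanSpace ℝ (Fin N) →L[ℝ] EuclideanSpace ℝ (Fin N)),
      P = fun m => φ (E m) := ⟨_, rfl⟩
  -- basic algebraic facts about real scalars and continuous linear maps
  have hA1 : ∀ (c : ℝ) (x y : EuclideanSpace ℝ (Fin N) →L[ℝ] EuclideanSpace ℝ (Fin N)),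
      x * (c • y) = c • (x * y) := fun c x y => by ext v; simp
  have hA2 : ∀ (c : ℝ) (x y : EuclideanSpace ℝ (Fin N) →L[ℝ] EuclideanSpace ℝ (Fin N)),
      (c • x) * y = c • (x * y) := fun c x y => by ext v; simp
  have hszero : ∀ (c : ℝ), c • (0 : EuclideanSpace ℝ (Fin N) →L[ℝ] EuclideanSpace ℝ (Fin N)) = 0 :=
    fun c => by ext v; simp
  have hnorm : ∀ (c : ℝ) (x : EuclideanSpace ℝ (Fin N) →L[ℝ] EuclideanSpace ℝ (Fin N)),
      ‖c • x‖ = |c| * ‖x‖ := fun c x => by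
    rw [norm_smul (α := ℝ) (β := EuclideanSpace ℝ (Fin N) →L[ℝ] EuclideanSpace ℝ (Fin N)) c x]
    rfl
  obtain ⟨M0, hM0one, hPle⟩ : ∃ M0 : ℝ, 1 ≤ M0 ∧ ∀ m, ‖P m‖ ≤ M0 := by
    refine ⟨1 + ∑ m, ‖P m‖, ?_, ?_⟩
    · have : (0 : ℝ) ≤ ∑ m, ‖P m‖ := Finset.sum_nonneg fun m _ => norm_nonneg _
      linarith
    · intro m
      have h1 : ‖P m‖ ≤ ∑ m', ‖P m'‖ :=
        Finset.single_le_sum (fun m' _ => norm_nonneg (P m')) (Finset.mem_univ m)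
      linarith
  have hM0pos : (0 : ℝ) < M0 := lt_of_lt_of_le one_pos hM0one
  refine ⟨M0 * M0 * Real.exp ‖a‖,
    mul_pos (mul_pos hM0pos hM0pos) (Real.exp_pos _), ?_⟩
  rintro t ⟨ht0, ht1⟩ l h hlh θ hθ
  set d := (l : ℕ) - (h : ℕ) with hd
  -- reduce to an operator norm bound
  have hcoe : (Matrix.toEuclideanLin (E l * NormedSpace.exp (t • A) * E h)) θ
      = φ (E l * NormedSpace.exp (t • A) * E h) θ := by
    rw [← Matrix.coe_toEuclideanCLM_eq_toEuclideanLin]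
    rfl
  rw [hcoe]
  have hmap : φ (E l * NormedSpace.exp (t • A) * E h)
      = P l * NormedSpace.exp (t • a) * P h := by
    rw [hP, ha, _root_.map_mul, _root_.map_mul, map_exp_euclidean, _root_.map_smul]
  rw [hmap]
  have hle1 : ‖(P l * NormedSpace.exp (t • a) * P h) θ‖
      ≤ ‖P l * NormedSpace.exp (t • a) * P h‖ := by
    calc ‖(P l * NormedSpace.exp (t • a) * P h) θ‖
        ≤ ‖P l * NormedSpace.exp (t • a) * P h‖ * ‖θ‖ :=
          ContinuousLinearMap.le_opNorm _ _
      _ = ‖P l * NormedSpace.exp (t • a) * P h‖ := by rw [hθ, mul_one]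
  refine hle1.trans ?_
  -- expand the exponential
  have hpow : ∀ k : ℕ, (t • a) ^ k = t ^ k • a ^ k := by
    intro k
    induction k with
    | zero => simp
    | succ k ih =>
      rw [pow_succ (t • a) k, ih, pow_succ a k, pow_succ t k]
      ext v
      simp [ContinuousLinearMap.mul_apply]
      ring
  have hsumm : Summable fun k : ℕ => (k.factorial : ℝ)⁻¹ • (t • a) ^ k :=
    expSeries_summable' (𝕂 := ℝ) (t • a)
  have hsumm2 : Summable fun k : ℕ => P l * ((k.factorial : ℝ)⁻¹ • (t • a) ^ k) :=
    hsumm.mul_left (P l)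
  have hexp : P l * NormedSpace.exp (t • a) * P h
      = ∑' k : ℕ, (k.factorial : ℝ)⁻¹ • (P l * (t • a) ^ k * P h) := by
    rw [exp_eq_tsum ℝ, ← hsumm.tsum_mul_left (P l), ← hsumm2.tsum_mul_right (P h)]
    exact tsum_congr fun k => by rw [hA1, hA2]
  rw [hexp]
  -- the comparison series
  have hS : HasSum (fun k : ℕ => (k.factorial : ℝ)⁻¹ • ‖a‖ ^ k) (NormedSpace.exp ‖a‖) := by
    simpa [exp_eq_tsum ℝ] using (expSeries_summable' (𝕂 := ℝ) ‖a‖).hasSum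
  have hS' : HasSum (fun k : ℕ => (M0 * M0 * t ^ d) * ((k.factorial : ℝ)⁻¹ • ‖a‖ ^ k))
      ((M0 * M0 * t ^ d) * Real.exp ‖a‖) := by
    rw [Real.exp_eq_exp_ℝ]
    exact hS.mul_left _
  have hbound : ∀ k : ℕ, ‖(k.factorial : ℝ)⁻¹ • (P l * (t • a) ^ k * P h)‖
      ≤ (M0 * M0 * t ^ d) * ((k.factorial : ℝ)⁻¹ • ‖a‖ ^ k) := by
    intro k
    have hknn : (0 : ℝ) ≤ (k.factorial : ℝ)⁻¹ := by positivity
    by_cases hk : k < d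
    · -- vanishing term
      have hv : E l * A ^ k * E h = 0 :=
        vanish_aux A E horth hsum hstruct k l h (by omega)
      have hv' : P l * a ^ k * P h = 0 := by
        have : φ (E l * A ^ k * E h) = P l * a ^ k * P h := by
          rw [hP, ha, _root_.map_mul, _root_.map_mul, _root_.map_pow]
        rw [hv, map_zero] at this
        exact this.symm
      have hz : P l * (t • a) ^ k * P h = 0 := by
        rw [hpow k, hA1, hA2, hv', hszero]
      rw [hz, hszero, norm_zero]
      have h2 : (0:ℝ) ≤ (k.factorial : ℝ)⁻¹ • ‖a‖ ^ k := by
        rw [smul_eq_mul]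
        positivity
      have h3 : (0:ℝ) ≤ M0 * M0 * t ^ d :=
        mul_nonneg (mul_nonneg hM0pos.le hM0pos.le) (pow_nonneg ht0 d)
      exact mul_nonneg h3 h2
    · push_neg at hk
      have htk : t ^ k ≤ t ^ d := pow_le_pow_of_le_one ht0 ht1 hk
      have h1 : ‖(t • a) ^ k‖ ≤ t ^ k * ‖a‖ ^ k := by
        rcases Nat.eq_zero_or_pos k with rfl | hk0
        · rw [pow_zero, pow_zero, pow_zero, one_mul, ContinuousLinearMap.one_def]
          exact ContinuousLinearMap.norm_id_le
        · calc ‖(t • a) ^ k‖ ≤ ‖t • a‖ ^ k := norm_pow_le' _ hk0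
            _ = (|t| * ‖a‖) ^ k := by rw [hnorm]
            _ = t ^ k * ‖a‖ ^ k := by rw [abs_of_nonneg ht0, mul_pow]
      have h2 : ‖(t • a) ^ k‖ ≤ t ^ d * ‖a‖ ^ k := by
        refine h1.trans ?_
        gcongr
      calc ‖(k.factorial : ℝ)⁻¹ • (P l * (t • a) ^ k * P h)‖
          = (k.factorial : ℝ)⁻¹ * ‖P l * (t • a) ^ k * P h‖ := by
            rw [hnorm, abs_of_nonneg hknn]
        _ ≤ (k.factorial : ℝ)⁻¹ * (‖P l‖ * ‖(t • a) ^ k‖ * ‖P h‖) := by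
            gcongr
            exact (norm_mul_le _ _).trans (by gcongr; exact norm_mul_le _ _)
        _ ≤ (k.factorial : ℝ)⁻¹ * (M0 * (t ^ d * ‖a‖ ^ k) * M0) := by
            have hw : (0:ℝ) ≤ t ^ d * ‖a‖ ^ k :=
              mul_nonneg (pow_nonneg ht0 d) (pow_nonneg (norm_nonneg a) k)
            have hinner : ‖P l‖ * ‖(t • a) ^ k‖ ≤ M0 * (t ^ d * ‖a‖ ^ k) :=
              mul_le_mul (hPle l) h2 (norm_nonneg _) hM0pos.le
            have houter : ‖P l‖ * ‖(t • a) ^ k‖ * ‖P h‖ ≤ M0 * (t ^ d * ‖a‖ ^ k) * M0 :=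
              mul_le_mul hinner (hPle h) (norm_nonneg _) (mul_nonneg hM0pos.le hw)
            exact mul_le_mul_of_nonneg_left houter hknn
        _ = (M0 * M0 * t ^ d) * ((k.factorial : ℝ)⁻¹ • ‖a‖ ^ k) := by
            simp only [smul_eq_mul]; ring
  calc ‖∑' k : ℕ, (k.factorial : ℝ)⁻¹ • (P l * (t • a) ^ k * P h)‖
      ≤ (M0 * M0 * t ^ d) * Real.exp ‖a‖ := tsum_of_norm_bounded hS' hbound
    _ = M0 * M0 * Real.exp ‖a‖ * t ^ d := by ring
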